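/- arXiv:1003.2280 — 5 statements merged into one kernel-verified Lean document; each statement's English description precedes it below -/
import Mathlib

section
/- There exist subspaces E^s, E^u of ℝ³ with dim E^s = 2, dim E^u = 1, A(E^s) = E^s, A(E^u) = E^u, E^s ∩ E^u = {0} and E^s + E^u = ℝ³, together with constants C ≥ 1 and ρ ∈ (0,1), such that for every n ≥ 0: ‖Aⁿ v‖ ≤ C ρⁿ ‖v‖ for all v ∈ E^s, and ‖A⁻ⁿ v‖ ≤ C ρⁿ ‖v‖ for all v ∈ E^u. -/
/-- The matrix with rows `(1,1,0)`, `(0,0,1)`, `(1,0,0)`, with real entries. -/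
def Areal : Matrix (Fin 3) (Fin 3) ℝ := !![1, 1, 0; 0, 0, 1; 1, 0, 0]

/-- The linear automorphism of Euclidean `ℝ³` given by the matrix `A`. -/
noncomputable def TA : EuclideanSpace ℝ (Fin 3) →ₗ[ℝ] EuclideanSpace ℝ (Fin 3) :=
  Matrix.toEuclideanLin Areal

section Aux

local notation "E3" => EuclideanSpace ℝ (Fin 3)

/-- The inverse matrix. -/
def Breal : Matrix (Fin 3) (Fin 3) ℝ := !![0, 0, 1; 1, 0, -1; 0, 1, 0]

/-- The inverse linear map. -/
noncomputable def TS : EuclideanSpace ℝ (Fin 3) →ₗ[ℝ] EuclideanSpace ℝ (Fin 3) :=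
  Matrix.toEuclideanLin Breal

lemma TA0 (w : E3) : TA w 0 = w 0 + w 1 := by
  simp [TA, Areal, Matrix.toEuclideanLin_apply, Matrix.mulVec, dotProduct,
    Fin.sum_univ_three]
lemma TA1 (w : E3) : TA w 1 = w 2 := by
  simp [TA, Areal, Matrix.toEuclideanLin_apply, Matrix.mulVec, dotProduct,
    Fin.sum_univ_three]
lemma TA2 (w : E3) : TA w 2 = w 0 := by
  simp [TA, Areal, Matrix.toEuclideanLin_apply, Matrix.mulVec, dotProduct,
    Fin.sum_univ_three]

lemma TS0 (w : E3) : TS w 0 = w 2 := by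
  simp [TS, Breal, Matrix.toEuclideanLin_apply, Matrix.mulVec, dotProduct,
    Fin.sum_univ_three]
lemma TS1 (w : E3) : TS w 1 = w 0 - w 2 := by
  simp [TS, Breal, Matrix.toEuclideanLin_apply, Matrix.mulVec, dotProduct,
    Fin.sum_univ_three]
  ring
lemma TS2 (w : E3) : TS w 2 = w 1 := by
  simp [TS, Breal, Matrix.toEuclideanLin_apply, Matrix.mulVec, dotProduct,
    Fin.sum_univ_three]

lemma hSA : TS ∘ₗ TA = LinearMap.id := by
  apply LinearMap.ext; intro w
  apply PiLp.ext; intro i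
  fin_cases i <;> simp [TS0, TS1, TS2, TA0, TA1, TA2]

lemma hAS : TA ∘ₗ TS = LinearMap.id := by
  apply LinearMap.ext; intro w
  apply PiLp.ext; intro i
  fin_cases i <;> simp [TS0, TS1, TS2, TA0, TA1, TA2]

lemma norm_sq3 (w : E3) : ‖w‖ ^ 2 = w 0 ^ 2 + w 1 ^ 2 + w 2 ^ 2 := by
  rw [EuclideanSpace.norm_eq, Real.sq_sqrt (by positivity)]
  simp [Fin.sum_univ_three, sq_abs]

lemma inner3 (u w : E3) : (inner ℝ u w : ℝ) = u 0 * w 0 + u 1 * w 1 + u 2 * w 2 := by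
  simp [PiLp.inner_apply, Fin.sum_univ_three]
  ring

lemma TA_norm_le (w : E3) : ‖TA w‖ ≤ 2 * ‖w‖ := by
  have h1 : ‖TA w‖ ^ 2 ≤ (2 * ‖w‖) ^ 2 := by
    rw [norm_sq3, mul_pow, norm_sq3, TA0, TA1, TA2]
    nlinarith [sq_nonneg (w 0 - w 1)]
  nlinarith [norm_nonneg (TA w), norm_nonneg w]

/-- Cayley–Hamilton for `A`: `A³ = A² + 1`. -/
lemma hCH (w : E3) : TA (TA (TA w)) = TA (TA w) + w := by
  apply PiLp.ext; intro i
  fin_cases i <;> simp [TA0, TA1, TA2]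

end Aux

set_option maxHeartbeats 2000000 in
/-- The hyperbolic splitting of `A`: there are subspaces `E^s`, `E^u` of `ℝ³` with
`dim E^s = 2`, `dim E^u = 1`, `A(E^s) = E^s`, `A(E^u) = E^u`, `E^s ∩ E^u = {0}`,
`E^s + E^u = ℝ³`, and constants `C ≥ 1`, `ρ ∈ (0,1)` such that for every `n ≥ 0`:
`‖Aⁿ v‖ ≤ C ρⁿ ‖v‖` for `v ∈ E^s` and `‖A⁻ⁿ v‖ ≤ C ρⁿ ‖v‖` for `v ∈ E^u`
(the inverse `A⁻¹` being realized by a two-sided linear inverse `S` of `A`). -/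
theorem anosov_hyperbolic_splitting :
    ∃ (Es Eu : Submodule ℝ (EuclideanSpace ℝ (Fin 3)))
      (S : EuclideanSpace ℝ (Fin 3) →ₗ[ℝ] EuclideanSpace ℝ (Fin 3)) (C ρ : ℝ),
      Module.finrank ℝ Es = 2 ∧ Module.finrank ℝ Eu = 1 ∧
      Es.map TA = Es ∧ Eu.map TA = Eu ∧
      Es ⊓ Eu = ⊥ ∧ Es ⊔ Eu = ⊤ ∧
      S ∘ₗ TA = LinearMap.id ∧ TA ∘ₗ S = LinearMap.id ∧
      1 ≤ C ∧ 0 < ρ ∧ ρ < 1 ∧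
      (∀ n : ℕ, ∀ v ∈ Es, ‖(TA ^ n) v‖ ≤ C * ρ ^ n * ‖v‖) ∧
      (∀ n : ℕ, ∀ v ∈ Eu, ‖(S ^ n) v‖ ≤ C * ρ ^ n * ‖v‖) := by
  classical
  -- the real root of x³ = x² + 1
  obtain ⟨t, ht_mem, ht⟩ : ∃ t : ℝ, t ∈ Set.Icc (1.4 : ℝ) 1.5 ∧ t ^ 3 = t ^ 2 + 1 := by
    have hcont : ContinuousOn (fun x : ℝ => x ^ 3 - x ^ 2 - 1) (Set.Icc 1.4 1.5) := by
      fun_prop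
    have hsub := intermediate_value_Icc (by norm_num : (1.4 : ℝ) ≤ 1.5) hcont
    have h0 : (0 : ℝ) ∈ Set.Icc ((1.4 : ℝ) ^ 3 - 1.4 ^ 2 - 1) ((1.5 : ℝ) ^ 3 - 1.5 ^ 2 - 1) := by
      constructor <;> norm_num
    obtain ⟨t, htm, hteq⟩ := hsub h0
    exact ⟨t, htm, by simp only at hteq; linarith⟩
  obtain ⟨ht14, ht15⟩ := ht_mem
  have ht0 : (0 : ℝ) < t := by linarith
  have ht1 : (1 : ℝ) < t := by linarith
  have hE3 : Module.finrank ℝ (EuclideanSpace ℝ (Fin 3)) = 3 := by simp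
  -- the unstable eigenvector and the stable hyperplane
  set v₀ : EuclideanSpace ℝ (Fin 3) := !₂[t, t ^ 2 - t, 1] with hv₀
  set u₀ : EuclideanSpace ℝ (Fin 3) := !₂[t ^ 2, t, 1] with hu₀
  have hv02 : v₀ 2 = 1 := rfl
  have hu02 : u₀ 2 = 1 := rfl
  set Eu : Submodule ℝ (EuclideanSpace ℝ (Fin 3)) := Submodule.span ℝ {v₀} with hEu
  set Es : Submodule ℝ (EuclideanSpace ℝ (Fin 3)) := (Submodule.span ℝ {u₀})ᗮ with hEs
  have hv₀ne : v₀ ≠ 0 := by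
    intro h; have : v₀ 2 = 0 := by rw [h]; rfl
    rw [hv02] at this; norm_num at this
  have hu₀ne : u₀ ≠ 0 := by
    intro h; have : u₀ 2 = 0 := by rw [h]; rfl
    rw [hu02] at this; norm_num at this
  have hAv : TA v₀ = t • v₀ := by
    apply PiLp.ext; intro i
    fin_cases i <;>
      simp [hv₀, TA0, TA1, TA2] <;>
      first | ring1 | linear_combination -ht | linear_combination ht
  have hEs_mem : ∀ x : EuclideanSpace ℝ (Fin 3), x ∈ Es ↔ (inner ℝ u₀ x : ℝ) = 0 := fun x =>
    Submodule.mem_orthogonal_singleton_iff_inner_right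
  have hinnerA : ∀ x : EuclideanSpace ℝ (Fin 3),
      (inner ℝ u₀ (TA x) : ℝ) = t * (inner ℝ u₀ x : ℝ) := by
    intro x
    rw [inner3, inner3, TA0, TA1, TA2, hu₀]
    simp
    linear_combination -(x 0) * ht
  have hEs_inv : ∀ x ∈ Es, TA x ∈ Es := by
    intro x hx
    rw [hEs_mem] at hx ⊢
    rw [hinnerA, hx, mul_zero]
  -- dimensions
  have hrEu : Module.finrank ℝ Eu = 1 := finrank_span_singleton hv₀ne
  have hrEs : Module.finrank ℝ Es = 2 := by
    have h1 := Submodule.finrank_add_finrank_orthogonal (K := Submodule.span ℝ {u₀})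
    rw [finrank_span_singleton hu₀ne, hE3, ← hEs] at h1
    omega
  -- transversality
  have hinf : Es ⊓ Eu = ⊥ := by
    rw [eq_bot_iff]
    intro x hx
    rw [Submodule.mem_inf] at hx
    obtain ⟨hxs, hxu⟩ := hx
    obtain ⟨c, rfl⟩ := Submodule.mem_span_singleton.mp hxu
    rw [hEs_mem, inner_smul_right, inner3, hu₀, hv₀] at hxs
    simp at hxs
    have hc : c = 0 := by
      rcases hxs with h | h
      · exact h
      · nlinarith
    simp [hc]
  have hsup : Es ⊔ Eu = ⊤ := by
    apply Submodule.eq_top_of_finrank_eq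
    have h2 := Submodule.finrank_sup_add_finrank_inf_eq Es Eu
    rw [hinf, hrEu, hrEs, finrank_bot] at h2
    rw [hE3]
    omega
  -- invariance
  have hmapEs : Es.map TA = Es := by
    apply Submodule.eq_of_le_of_finrank_le
    · rintro _ ⟨x, hx, rfl⟩
      exact hEs_inv x hx
    · have h3 := LinearEquiv.finrank_map_eq
        (LinearEquiv.ofLinear TA TS hAS hSA) Es
      rw [show ((LinearEquiv.ofLinear TA TS hAS hSA :
          EuclideanSpace ℝ (Fin 3) ≃ₗ[ℝ] EuclideanSpace ℝ (Fin 3)) :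
          EuclideanSpace ℝ (Fin 3) →ₗ[ℝ] EuclideanSpace ℝ (Fin 3)) = TA from rfl] at h3
      rw [h3]
  have hmapEu : Eu.map TA = Eu := by
    rw [hEu, Submodule.map_span, Set.image_singleton, hAv]
    exact Submodule.span_singleton_smul_eq (isUnit_iff_ne_zero.mpr ht0.ne') v₀
  -- the eigenspace of `t` is spanned by `v₀`
  have hker : ∀ x : EuclideanSpace ℝ (Fin 3), TA x = t • x → x = (x 2) • v₀ := by
    intro x hx
    have h0 : x 0 + x 1 = t * x 0 := by
      have h : TA x 0 = (t • x) 0 := by rw [hx]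
      rwa [TA0] at h
    have h1 : x 2 = t * x 1 := by
      have h : TA x 1 = (t • x) 1 := by rw [hx]
      rwa [TA1] at h
    have h2 : x 0 = t * x 2 := by
      have h : TA x 2 = (t • x) 2 := by rw [hx]
      rwa [TA2] at h
    apply PiLp.ext; intro i
    fin_cases i <;> simp [hv₀]
    · linarith
    · nlinarith [h0, h1, h2]
  -- the quadratic relation satisfied by `A` on `Es`
  have hquad : ∀ x ∈ Es, TA (TA x) = (1 - t) • TA x - t⁻¹ • x := by
    intro x hx
    set u : EuclideanSpace ℝ (Fin 3) := TA (TA x) + (t - 1) • TA x + t⁻¹ • x with hu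
    have hAu : TA u = t • u := by
      rw [hu, map_add, map_add, map_smul, map_smul, hCH]
      match_scalars <;> field_simp <;>
        first | ring1 | linear_combination ht | linear_combination -ht
    have huEu : u ∈ Eu := by
      rw [hEu, hker u hAu]
      exact Submodule.smul_mem _ _ (Submodule.mem_span_singleton_self v₀)
    have huEs : u ∈ Es := by
      rw [hu]
      exact Es.add_mem (Es.add_mem (hEs_inv _ (hEs_inv _ hx))
        (Es.smul_mem _ (hEs_inv _ hx))) (Es.smul_mem _ hx)
    have hu0 : u = 0 := by
      have : u ∈ Es ⊓ Eu := Submodule.mem_inf.mpr ⟨huEs, huEu⟩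
      rwa [hinf, Submodule.mem_bot] at this
    rw [hu] at hu0
    linear_combination (norm := module) hu0
  -- the contraction/expansion constants
  have ha2 : ((1 - t) / 2) ^ 2 < t⁻¹ := by
    rw [inv_eq_one_div, lt_div_iff₀ ht0]
    nlinarith
  set b : ℝ := Real.sqrt (t⁻¹ - ((1 - t) / 2) ^ 2) with hbdef
  have hb : 0 < b := Real.sqrt_pos.mpr (by linarith)
  have hb2 : b ^ 2 = t⁻¹ - ((1 - t) / 2) ^ 2 := Real.sq_sqrt (by linarith)
  set ρ : ℝ := Real.sqrt t⁻¹ with hρdef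
  have hρ0 : 0 < ρ := Real.sqrt_pos.mpr (by positivity)
  have hρ2 : ρ ^ 2 = t⁻¹ := Real.sq_sqrt (by positivity)
  have htinv1 : t⁻¹ < 1 := inv_lt_one_of_one_lt₀ ht1
  have hρ1 : ρ < 1 := by nlinarith
  set z : ℂ := ⟨(1 - t) / 2, b⟩ with hzdef
  have habs : ‖z‖ = ρ := by
    rw [Complex.norm_def, Complex.normSq_mk]
    rw [show (1 - t) / 2 * ((1 - t) / 2) + b * b = ρ ^ 2 by nlinarith]
    exact Real.sqrt_sq hρ0.le
  have hre : ∀ n : ℕ, |(z ^ n).re| ≤ ρ ^ n := fun n => by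
    calc |(z ^ n).re| ≤ ‖z ^ n‖ := Complex.abs_re_le_norm _
    _ = ρ ^ n := by rw [norm_pow, habs]
  have him : ∀ n : ℕ, |(z ^ n).im| ≤ ρ ^ n := fun n => by
    calc |(z ^ n).im| ≤ ‖z ^ n‖ := Complex.abs_im_le_norm _
    _ = ρ ^ n := by rw [norm_pow, habs]
  set C : ℝ := 1 + (2 + |(1 - t) / 2|) / b with hCdef
  have hC1 : 1 ≤ C := le_add_of_nonneg_right (by positivity)
  -- the stable estimate
  have hEsEst : ∀ n : ℕ, ∀ w ∈ Es, ‖(TA ^ n) w‖ ≤ C * ρ ^ n * ‖w‖ := by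
    intro n w hw
    set y : EuclideanSpace ℝ (Fin 3) := b⁻¹ • (TA w - ((1 - t) / 2) • w) with hy
    have hby : b • y = TA w - ((1 - t) / 2) • w := by
      rw [hy, smul_smul, mul_inv_cancel₀ hb.ne', one_smul]
    have hyn : ‖y‖ ≤ (2 + |(1 - t) / 2|) / b * ‖w‖ := by
      rw [hy, norm_smul, Real.norm_eq_abs, abs_of_pos (inv_pos.mpr hb)]
      have h1 : ‖TA w - ((1 - t) / 2) • w‖ ≤ (2 + |(1 - t) / 2|) * ‖w‖ := by
        calc ‖TA w - ((1 - t) / 2) • w‖ ≤ ‖TA w‖ + ‖((1 - t) / 2) • w‖ := norm_sub_le _ _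
        _ ≤ 2 * ‖w‖ + |(1 - t) / 2| * ‖w‖ := by
            rw [norm_smul, Real.norm_eq_abs]
            exact add_le_add (TA_norm_le w) le_rfl
        _ = (2 + |(1 - t) / 2|) * ‖w‖ := by ring
      calc b⁻¹ * ‖TA w - ((1 - t) / 2) • w‖ ≤ b⁻¹ * ((2 + |(1 - t) / 2|) * ‖w‖) :=
            mul_le_mul_of_nonneg_left h1 (inv_pos.mpr hb).le
      _ = (2 + |(1 - t) / 2|) / b * ‖w‖ := by field_simp
    have hTAw : TA w = ((1 - t) / 2) • w + b • y := by
      rw [hby]; module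
    have hTAy : TA y = ((1 - t) / 2) • y - b • w := by
      apply smul_right_injective (EuclideanSpace ℝ (Fin 3)) hb.ne'
      show b • TA y = b • (((1 - t) / 2) • y - b • w)
      rw [← map_smul, hby, map_sub, map_smul, hquad w hw, smul_sub,
        smul_comm b ((1 - t) / 2), hby]
      match_scalars <;>
        first | ring1 | linear_combination hb2 | linear_combination -hb2
    have hind : ∀ m : ℕ, (TA ^ m) w = ((z ^ m).re) • w + ((z ^ m).im) • y := by
      intro m
      induction m with
      | zero => simp
      | succ k ih =>
        rw [pow_succ', Module.End.mul_apply, ih, map_add, map_smul, map_smul,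
          hTAw, hTAy, pow_succ' z k, Complex.mul_re, Complex.mul_im]
        rw [show z.re = (1 - t) / 2 from rfl, show z.im = b from rfl]
        match_scalars <;> ring
    rw [hind n]
    calc ‖((z ^ n).re) • w + ((z ^ n).im) • y‖
        ≤ |(z ^ n).re| * ‖w‖ + |(z ^ n).im| * ‖y‖ := by
          refine (norm_add_le _ _).trans ?_
          rw [norm_smul, norm_smul, Real.norm_eq_abs, Real.norm_eq_abs]
    _ ≤ ρ ^ n * ‖w‖ + ρ ^ n * ((2 + |(1 - t) / 2|) / b * ‖w‖) :=
          add_le_add (mul_le_mul_of_nonneg_right (hre n) (norm_nonneg w))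
            (mul_le_mul (him n) hyn (norm_nonneg y) (pow_nonneg hρ0.le n))
    _ = C * ρ ^ n * ‖w‖ := by rw [hCdef]; ring
  -- the unstable estimate
  have hSv : TS v₀ = t⁻¹ • v₀ := by
    have h1 : TS (TA v₀) = v₀ := by
      have := congrArg (fun f => f v₀) hSA
      simpa using this
    rw [hAv, map_smul] at h1
    conv_rhs => rw [← h1]
    rw [smul_smul, inv_mul_cancel₀ ht0.ne', one_smul]
  have hSn : ∀ (n : ℕ) (c : ℝ), (TS ^ n) (c • v₀) = (c * (t⁻¹) ^ n) • v₀ := by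
    intro n
    induction n with
    | zero => intro c; simp
    | succ k ih =>
      intro c
      rw [pow_succ, Module.End.mul_apply, map_smul, hSv, smul_smul, ih]
      ring_nf
  have htρ : t⁻¹ ≤ ρ := by nlinarith
  have hEuEst : ∀ n : ℕ, ∀ v ∈ Eu, ‖(TS ^ n) v‖ ≤ C * ρ ^ n * ‖v‖ := by
    intro n v hv
    rw [hEu] at hv
    obtain ⟨c, rfl⟩ := Submodule.mem_span_singleton.mp hv
    rw [hSn n c, norm_smul, norm_smul, Real.norm_eq_abs, Real.norm_eq_abs, abs_mul,
      abs_of_nonneg (pow_nonneg (inv_nonneg.mpr ht0.le) n)]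
    have h2 : (t⁻¹) ^ n ≤ ρ ^ n := pow_le_pow_left₀ (inv_nonneg.mpr ht0.le) htρ n
    calc |c| * (t⁻¹) ^ n * ‖v₀‖ ≤ |c| * ρ ^ n * ‖v₀‖ := by
          apply mul_le_mul_of_nonneg_right _ (norm_nonneg v₀)
          exact mul_le_mul_of_nonneg_left h2 (abs_nonneg c)
    _ ≤ C * ρ ^ n * (|c| * ‖v₀‖) := by
          rw [show C * ρ ^ n * (|c| * ‖v₀‖) = C * (|c| * ρ ^ n * ‖v₀‖) by ring]
          exact le_mul_of_one_le_left (by positivity) hC1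
  exact ⟨Es, Eu, TS, C, ρ, hrEs, hrEu, hmapEs, hmapEu, hinf, hsup, hSA, hAS,
    hC1, hρ0, hρ1, hEsEst, hEuEst⟩
end

section
/- There exist N ≥ 1 and subspaces E^s, E^u of ℝ³ with dim E^s = 2, dim E^u = 1, A(E^s) = E^s, A(E^u) = E^u, E^s ∩ E^u = {0} and E^s + E^u = ℝ³, such that ‖A^N v‖ ≤ (1/3)‖v‖ for all v ∈ E^s and ‖A^(−N) v‖ ≤ (1/3)‖v‖ for all v ∈ E^u. -/
/-! ### Auxiliary constructions -/

lemma anosov_TA_apply (v : EuclideanSpace ℝ (Fin 3)) (i : Fin 3) :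
    TA v i = ![v 0 + v 1, v 2, v 0] i := by
  fin_cases i <;>
    · show (Matrix.toEuclideanLin Areal v : Fin 3 → ℝ) _ = _
      rw [Matrix.toEuclideanLin_apply]
      show Matrix.mulVec Areal (v : Fin 3 → ℝ) _ = _
      simp [Areal, Matrix.mulVec, dotProduct, Fin.sum_univ_three]

noncomputable def anosovSB : EuclideanSpace ℝ (Fin 3) →ₗ[ℝ] EuclideanSpace ℝ (Fin 3) :=
  Matrix.toEuclideanLin !![0, 0, 1; 1, 0, -1; 0, 1, 0]

lemma anosov_SB_apply (v : EuclideanSpace ℝ (Fin 3)) (i : Fin 3) :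
    anosovSB v i = ![v 2, v 0 - v 2, v 1] i := by
  fin_cases i <;>
    · show (Matrix.toEuclideanLin _ v : Fin 3 → ℝ) _ = _
      rw [Matrix.toEuclideanLin_apply]
      show Matrix.mulVec _ (v : Fin 3 → ℝ) _ = _
      simp [Matrix.mulVec, dotProduct, Fin.sum_univ_three]
      try ring

lemma anosov_exL : ∃ l : ℝ, (1.465 ≤ l ∧ l ≤ 1.466) ∧ l ^ 3 = l ^ 2 + 1 := by
  have hc : ContinuousOn (fun x : ℝ => x ^ 3 - x ^ 2 - 1) (Set.Icc 1.465 1.466) :=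
    (Continuous.sub (by continuity) continuous_const).continuousOn
  have h := intermediate_value_Icc (by norm_num : (1.465 : ℝ) ≤ 1.466) hc
  have h0 : (0 : ℝ) ∈ Set.Icc ((1.465:ℝ) ^ 3 - (1.465:ℝ) ^ 2 - 1)
      ((1.466:ℝ) ^ 3 - (1.466:ℝ) ^ 2 - 1) := by constructor <;> norm_num
  obtain ⟨l, hl, hfl⟩ := h h0
  exact ⟨l, ⟨hl.1, hl.2⟩, by simp at hfl; linarith⟩

noncomputable def Lr : ℝ := anosov_exL.choose

lemma Lr_lb : 1.465 ≤ Lr := anosov_exL.choose_spec.1.1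
lemma Lr_ub : Lr ≤ 1.466 := anosov_exL.choose_spec.1.2
lemma Lr_cube : Lr ^ 3 = Lr ^ 2 + 1 := anosov_exL.choose_spec.2
lemma Lr_pos : 0 < Lr := lt_of_lt_of_le (by norm_num) Lr_lb
lemma Lr_ne : Lr ≠ 0 := ne_of_gt Lr_pos

/-- The linear functional whose kernel is the stable plane. -/
noncomputable def anosovPhi : EuclideanSpace ℝ (Fin 3) →ₗ[ℝ] ℝ where
  toFun v := Lr ^ 2 * v 0 + Lr * v 1 + v 2
  map_add' v w := by simp [PiLp.add_apply]; ring
  map_smul' c v := by simp [PiLp.smul_apply, smul_eq_mul]; ring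

/-- The unstable eigenvector. -/
noncomputable def anosovU : EuclideanSpace ℝ (Fin 3) :=
  (WithLp.equiv 2 (Fin 3 → ℝ)).symm ![Lr ^ 2, 1, Lr]

lemma anosovU_apply (i : Fin 3) : anosovU i = ![Lr ^ 2, 1, Lr] i := rfl

/-- The quadratic form contracted by `A`. -/
def Qf (L x y z : ℝ) : ℝ :=
  ((1 - L ^ 2) * x + (1 - L) * y + 2 * z) ^ 2 +
    (3 * L ^ 2 - 2 * L - 1) * ((1 - L) * x + y) ^ 2

lemma Qf_contract (L x y z : ℝ) (hm : L ^ 3 = L ^ 2 + 1) :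
    L * Qf L (x + y) z x = Qf L x y z := by
  unfold Qf
  linear_combination (4*L^2*x^2 + 8*L^2*x*y + 4*L^2*y^2 - 4*L*x*z - 4*L*y*z
    - 8*L*x^2 - 8*L*x*y - 4*L*y^2 + 4*x*z + 4*y*z + 4*z^2) * hm


lemma quad_nonneg_cert (a b c x y t lam : ℝ) (h1 : 0 ≤ lam * b)
    (h2 : 0 ≤ a - lam * b) (h3 : 0 ≤ c - lam * t ^ 2 * b) (ht : 2 * lam * t = 1) :
    0 ≤ a * x ^ 2 + b * (x * y) + c * y ^ 2 := by
  have key : a * x ^ 2 + b * (x * y) + c * y ^ 2 =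
      lam * b * (x + t * y) ^ 2 + (a - lam * b) * x ^ 2 + (c - lam * t ^ 2 * b) * y ^ 2
        + (1 - 2 * lam * t) * (b * (x * y)) := by ring
  rw [key, ht]
  have p1 : (0:ℝ) ≤ lam * b * (x + t * y) ^ 2 := mul_nonneg h1 (sq_nonneg _)
  have p2 : (0:ℝ) ≤ (a - lam * b) * x ^ 2 := mul_nonneg h2 (sq_nonneg _)
  have p3 : (0:ℝ) ≤ (c - lam * t ^ 2 * b) * y ^ 2 := mul_nonneg h3 (sq_nonneg _)
  nlinarith [p1, p2, p3]

lemma Qf_lower (L x y z : ℝ) (hm : L ^ 3 = L ^ 2 + 1) (h1 : 1.465 ≤ L) (h2 : L ≤ 1.466)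
    (hz : L ^ 2 * x + L * y + z = 0) :
    (14 / 5) * (x ^ 2 + y ^ 2 + z ^ 2) ≤ Qf L x y z := by
  have hred : Qf L x y z - (14 / 5) * (x ^ 2 + y ^ 2 + z ^ 2) =
      (6/5*L^2 + 46/5*L - 8/5) * x^2 + (52/5*L^2 - 8*L + 32/5) * (x*y)
        + (46/5*L^2 - 8*L - 14/5) * y^2 := by
    unfold Qf
    linear_combination (46/5*L*x^2 + 6/5*x^2 + 32/5*x*y) * hm +
      (-26/5*L^2*x - 26/5*L*y + 4*x + 4*y + 6/5*z) * hz
  have hA : (14.45 : ℝ) ≤ 6/5*L^2 + 46/5*L - 8/5 := by nlinarith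
  have hB1 : (17 : ℝ) ≤ 52/5*L^2 - 8*L + 32/5 := by nlinarith
  have hB2 : 52/5*L^2 - 8*L + 32/5 ≤ (17.03 : ℝ) := by nlinarith
  have hC : (5.22 : ℝ) ≤ 46/5*L^2 - 8*L - 14/5 := by nlinarith
  have pos := quad_nonneg_cert (6/5*L^2 + 46/5*L - 8/5) (52/5*L^2 - 8*L + 32/5)
    (46/5*L^2 - 8*L - 14/5) x y (59/100) (50/59)
    (by nlinarith) (by nlinarith) (by nlinarith) (by norm_num)
  linarith

lemma Qf_upper (L x y z : ℝ) (hm : L ^ 3 = L ^ 2 + 1) (h1 : 1.465 ≤ L) (h2 : L ≤ 1.466)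
    (hz : L ^ 2 * x + L * y + z = 0) :
    Qf L x y z ≤ (28 / 5) * (x ^ 2 + y ^ 2 + z ^ 2) := by
  have hred : (28 / 5) * (x ^ 2 + y ^ 2 + z ^ 2) - Qf L x y z =
      (8/5*L^2 - 32/5*L + 36/5) * x^2 + (-24/5*L^2 + 8*L - 4/5) * (x*y)
        + (-32/5*L^2 + 8*L + 28/5) * y^2 := by
    unfold Qf
    linear_combination (-32/5*L*x^2 + 8/5*x^2 - 4/5*x*y) * hm +
      (12/5*L^2*x + 12/5*L*y - 4*x - 4*y + 8/5*z) * hz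
  have hA : (1.256 : ℝ) ≤ 8/5*L^2 - 32/5*L + 36/5 := by nlinarith
  have hB1 : (0.612 : ℝ) ≤ -24/5*L^2 + 8*L - 4/5 := by nlinarith
  have hB2 : -24/5*L^2 + 8*L - 4/5 ≤ (0.619 : ℝ) := by nlinarith
  have pos := quad_nonneg_cert (8/5*L^2 - 32/5*L + 36/5) (-24/5*L^2 + 8*L - 4/5)
    (-32/5*L^2 + 8*L + 28/5) x y (1/4) 2
    (by nlinarith) (by nlinarith) (by nlinarith) (by norm_num)
  linarith

lemma anosovPhi_apply (v : EuclideanSpace ℝ (Fin 3)) :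
    anosovPhi v = Lr ^ 2 * v 0 + Lr * v 1 + v 2 := rfl

lemma anosov_norm_eq (v : EuclideanSpace ℝ (Fin 3)) :
    ‖v‖ = Real.sqrt (v 0 ^ 2 + v 1 ^ 2 + v 2 ^ 2) := by
  rw [EuclideanSpace.norm_eq]
  simp [Fin.sum_univ_three, Real.norm_eq_abs, sq_abs]

lemma anosov_phi_TA (v : EuclideanSpace ℝ (Fin 3)) :
    anosovPhi (TA v) = Lr * anosovPhi v := by
  have e0 : TA v 0 = v 0 + v 1 := anosov_TA_apply v 0
  have e1 : TA v 1 = v 2 := anosov_TA_apply v 1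
  have e2 : TA v 2 = v 0 := anosov_TA_apply v 2
  rw [anosovPhi_apply, anosovPhi_apply, e0, e1, e2]
  linear_combination (-(v 0)) * Lr_cube

lemma anosov_phi_SB (v : EuclideanSpace ℝ (Fin 3)) :
    Lr * anosovPhi (anosovSB v) = anosovPhi v := by
  have e0 : anosovSB v 0 = v 2 := anosov_SB_apply v 0
  have e1 : anosovSB v 1 = v 0 - v 2 := anosov_SB_apply v 1
  have e2 : anosovSB v 2 = v 1 := anosov_SB_apply v 2
  rw [anosovPhi_apply, anosovPhi_apply, e0, e1, e2]
  linear_combination (v 2) * Lr_cube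

lemma anosov_SB_TA : anosovSB ∘ₗ TA = LinearMap.id := by
  refine LinearMap.ext fun v => ?_
  ext i
  have h := anosov_SB_apply (TA v) i
  fin_cases i <;>
    simp only [LinearMap.comp_apply, LinearMap.id_apply] <;>
    rw [anosov_SB_apply] <;>
    simp [anosov_TA_apply]

lemma anosov_TA_SB : TA ∘ₗ anosovSB = LinearMap.id := by
  refine LinearMap.ext fun v => ?_
  ext i
  fin_cases i <;>
    simp only [LinearMap.comp_apply, LinearMap.id_apply] <;>
    rw [anosov_TA_apply] <;>
    simp [anosov_SB_apply]

lemma anosov_TA_u : TA anosovU = Lr • anosovU := by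
  ext i
  fin_cases i <;>
    · rw [show (TA anosovU) _ = _ from anosov_TA_apply anosovU _]
      simp [anosovU_apply, PiLp.smul_apply, smul_eq_mul]
      try linear_combination Lr_cube
      try linear_combination -Lr_cube
      try ring

lemma anosov_SB_u : Lr • anosovSB anosovU = anosovU := by
  ext i
  fin_cases i <;>
    · simp only [PiLp.smul_apply, smul_eq_mul]
      rw [show (anosovSB anosovU) _ = _ from anosov_SB_apply anosovU _]
      simp [anosovU_apply]
      try linear_combination Lr_cube
      try linear_combination -Lr_cube
      try ring

lemma anosov_u_ne : anosovU ≠ 0 := by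
  intro h
  have : anosovU 1 = 0 := by rw [h]; rfl
  rw [anosovU_apply] at this
  simp at this

lemma anosov_phi_u : anosovPhi anosovU = Lr ^ 4 + 2 * Lr := by
  rw [anosovPhi_apply]
  simp [anosovU_apply]
  ring

lemma anosov_phi_u_ne : anosovPhi anosovU ≠ 0 := by
  rw [anosov_phi_u]
  have := Lr_pos
  positivity

lemma anosov_L8 : (18 : ℝ) ≤ Lr ^ 8 := by
  have h : (1.465 : ℝ) ^ 8 ≤ Lr ^ 8 := pow_le_pow_left₀ (by norm_num) Lr_lb 8
  nlinarith

/-- After passing to an iterate, the Anosov matrix `A` contracts the stable subspace and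
(backwards) the unstable subspace at rate at most `1/3`: there exist `N ≥ 1` and
`A`-invariant subspaces `E^s`, `E^u` of dimensions `2` and `1` with
`E^s ∩ E^u = {0}`, `E^s + E^u = ℝ³`, such that `‖A^N v‖ ≤ (1/3)‖v‖` on `E^s` and
`‖A^(−N) v‖ ≤ (1/3)‖v‖` on `E^u` (the inverse being a two-sided linear inverse `S`). -/
theorem anosov_iterate_contracts_by_one_third :
    ∃ (N : ℕ) (Es Eu : Submodule ℝ (EuclideanSpace ℝ (Fin 3)))
      (S : EuclideanSpace ℝ (Fin 3) →ₗ[ℝ] EuclideanSpace ℝ (Fin 3)),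
      1 ≤ N ∧
      Module.finrank ℝ Es = 2 ∧ Module.finrank ℝ Eu = 1 ∧
      Es.map TA = Es ∧ Eu.map TA = Eu ∧
      Es ⊓ Eu = ⊥ ∧ Es ⊔ Eu = ⊤ ∧
      S ∘ₗ TA = LinearMap.id ∧ TA ∘ₗ S = LinearMap.id ∧
      (∀ v ∈ Es, ‖(TA ^ N) v‖ ≤ (1 / 3 : ℝ) * ‖v‖) ∧
      (∀ v ∈ Eu, ‖(S ^ N) v‖ ≤ (1 / 3 : ℝ) * ‖v‖) := by
  refine ⟨8, LinearMap.ker anosovPhi, ℝ ∙ anosovU, anosovSB, by norm_num, ?_, ?_, ?_, ?_, ?_, ?_,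
    anosov_SB_TA, anosov_TA_SB, ?_, ?_⟩
  · -- finrank ker = 2
    have hrk := LinearMap.finrank_range_add_finrank_ker anosovPhi
    have hdim : Module.finrank ℝ (EuclideanSpace ℝ (Fin 3)) = 3 := by
      simp [finrank_euclideanSpace_fin]
    have hle : Module.finrank ℝ (LinearMap.range anosovPhi) ≤ 1 := by
      simpa using Submodule.finrank_le (LinearMap.range anosovPhi)
    have hne : Module.finrank ℝ (LinearMap.range anosovPhi) ≠ 0 := by
      intro h0
      rw [Submodule.finrank_eq_zero] at h0
      exact anosov_phi_u_ne (by
        have : anosovPhi anosovU ∈ LinearMap.range anosovPhi := ⟨anosovU, rfl⟩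
        rw [h0] at this
        simpa using this)
    omega
  · exact finrank_span_singleton anosov_u_ne
  · -- Es invariant
    refine le_antisymm ?_ ?_
    · rw [Submodule.map_le_iff_le_comap]
      intro v hv
      simp only [LinearMap.mem_ker] at hv ⊢
      show anosovPhi (TA v) = 0
      rw [anosov_phi_TA, hv, mul_zero]
    · intro v hv
      simp only [LinearMap.mem_ker] at hv
      refine ⟨anosovSB v, ?_, ?_⟩
      · simp only [SetLike.mem_coe, LinearMap.mem_ker]
        have := anosov_phi_SB v
        rw [hv] at this
        exact mul_left_cancel₀ Lr_ne (by rw [this, mul_zero])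
      · have h := LinearMap.ext_iff.mp anosov_TA_SB v
        simpa using h
  · -- Eu invariant
    rw [Submodule.map_span, Set.image_singleton, anosov_TA_u,
      Submodule.span_singleton_smul_eq (isUnit_iff_ne_zero.mpr Lr_ne)]
  · -- inf = bot
    rw [eq_bot_iff]
    rintro v ⟨hv1, hv2⟩
    obtain ⟨c, rfl⟩ := Submodule.mem_span_singleton.mp hv2
    simp only [SetLike.mem_coe, LinearMap.mem_ker, map_smul, smul_eq_mul] at hv1
    rcases mul_eq_zero.mp hv1 with h | h
    · simp [h]
    · exact absurd h anosov_phi_u_ne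
  · -- sup = top
    have hinf : LinearMap.ker anosovPhi ⊓ (ℝ ∙ anosovU) = ⊥ := by
      rw [eq_bot_iff]
      rintro v ⟨hv1, hv2⟩
      obtain ⟨c, rfl⟩ := Submodule.mem_span_singleton.mp hv2
      simp only [SetLike.mem_coe, LinearMap.mem_ker, map_smul, smul_eq_mul] at hv1
      rcases mul_eq_zero.mp hv1 with h | h
      · simp [h]
      · exact absurd h anosov_phi_u_ne
    apply Submodule.eq_top_of_finrank_eq
    have h1 := Submodule.finrank_sup_add_finrank_inf_eq (LinearMap.ker anosovPhi) (ℝ ∙ anosovU)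
    rw [hinf] at h1
    simp only [finrank_bot, add_zero] at h1
    have hker : Module.finrank ℝ (LinearMap.ker anosovPhi) = 2 := by
      have hrk := LinearMap.finrank_range_add_finrank_ker anosovPhi
      have hdim : Module.finrank ℝ (EuclideanSpace ℝ (Fin 3)) = 3 := by
        simp [finrank_euclideanSpace_fin]
      have hle : Module.finrank ℝ (LinearMap.range anosovPhi) ≤ 1 := by
        simpa using Submodule.finrank_le (LinearMap.range anosovPhi)
      have hne : Module.finrank ℝ (LinearMap.range anosovPhi) ≠ 0 := by
        intro h0
        rw [Submodule.finrank_eq_zero] at h0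
        exact anosov_phi_u_ne (by
          have : anosovPhi anosovU ∈ LinearMap.range anosovPhi := ⟨anosovU, rfl⟩
          rw [h0] at this
          simpa using this)
      omega
    rw [hker, finrank_span_singleton anosov_u_ne] at h1
    rw [h1]
    simp [finrank_euclideanSpace_fin]
  · -- stable contraction
    intro v hv
    simp only [LinearMap.mem_ker] at hv
    have hphin : ∀ n : ℕ, anosovPhi ((TA ^ n) v) = 0 := by
      intro n
      induction n with
      | zero => simpa using hv
      | succ n ih =>
        rw [pow_succ', Module.End.mul_apply, anosov_phi_TA, ih, mul_zero]
    have hQn : ∀ n : ℕ, Qf Lr (v 0) (v 1) (v 2) =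
        Lr ^ n * Qf Lr (((TA ^ n) v) 0) (((TA ^ n) v) 1) (((TA ^ n) v) 2) := by
      intro n
      induction n with
      | zero => simp
      | succ n ih =>
        set w := (TA ^ n) v with hw
        have e0 : TA w 0 = w 0 + w 1 := anosov_TA_apply w 0
        have e1 : TA w 1 = w 2 := anosov_TA_apply w 1
        have e2 : TA w 2 = w 0 := anosov_TA_apply w 2
        have hstep : Qf Lr (w 0) (w 1) (w 2) =
            Lr * Qf Lr ((TA w) 0) ((TA w) 1) ((TA w) 2) := by
          rw [e0, e1, e2]
          exact (Qf_contract Lr (w 0) (w 1) (w 2) Lr_cube).symm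
        have hsucc : (TA ^ (n + 1)) v = TA w := by rw [pow_succ', Module.End.mul_apply, hw]
        rw [hsucc, ih, hstep]
        ring
    set w := (TA ^ 8) v with hw
    have hzv : Lr ^ 2 * v 0 + Lr * v 1 + v 2 = 0 := hv
    have hzw : Lr ^ 2 * w 0 + Lr * w 1 + w 2 = 0 := hphin 8
    have hup := Qf_upper Lr (v 0) (v 1) (v 2) Lr_cube Lr_lb Lr_ub hzv
    have hlo := Qf_lower Lr (w 0) (w 1) (w 2) Lr_cube Lr_lb Lr_ub hzw
    have hQ8 := hQn 8
    rw [← hw] at hQ8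
    have hL8 := anosov_L8
    have hwn : (0:ℝ) ≤ w 0 ^ 2 + w 1 ^ 2 + w 2 ^ 2 := by positivity
    have hkey : w 0 ^ 2 + w 1 ^ 2 + w 2 ^ 2 ≤ (1/9) * (v 0 ^ 2 + v 1 ^ 2 + v 2 ^ 2) := by
      nlinarith [mul_le_mul_of_nonneg_left hlo (by positivity : (0:ℝ) ≤ Lr ^ 8)]
    rw [anosov_norm_eq, anosov_norm_eq]
    have h13 : (1/3 : ℝ) * Real.sqrt (v 0 ^ 2 + v 1 ^ 2 + v 2 ^ 2) =
        Real.sqrt ((1/9) * (v 0 ^ 2 + v 1 ^ 2 + v 2 ^ 2)) := by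
      rw [show (1/9 : ℝ) * (v 0 ^ 2 + v 1 ^ 2 + v 2 ^ 2) =
        (1/3)^2 * (v 0 ^ 2 + v 1 ^ 2 + v 2 ^ 2) by ring, Real.sqrt_mul (by positivity),
        Real.sqrt_sq (by norm_num)]
    rw [h13]
    exact Real.sqrt_le_sqrt hkey
  · -- unstable contraction
    intro v hv
    obtain ⟨c, rfl⟩ := Submodule.mem_span_singleton.mp hv
    have hSu : anosovSB anosovU = Lr⁻¹ • anosovU := by
      calc anosovSB anosovU = Lr⁻¹ • (Lr • anosovSB anosovU) := by
            rw [smul_smul, inv_mul_cancel₀ Lr_ne, one_smul]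
        _ = Lr⁻¹ • anosovU := by rw [anosov_SB_u]
    have hSn : ∀ n : ℕ, (anosovSB ^ n) anosovU = (Lr⁻¹) ^ n • anosovU := by
      intro n
      induction n with
      | zero => simp
      | succ n ih =>
        rw [pow_succ', Module.End.mul_apply, ih, map_smul, hSu, smul_smul, pow_succ']
        rw [mul_comm]
    rw [map_smul, hSn 8, norm_smul, norm_smul, norm_smul]
    have hnu : (0:ℝ) ≤ ‖anosovU‖ := norm_nonneg _
    have h8 : ‖(Lr⁻¹) ^ 8‖ ≤ 1/3 := by
      rw [Real.norm_eq_abs, abs_of_nonneg (by positivity : (0:ℝ) ≤ (Lr⁻¹)^8), inv_pow]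
      have h3 : (3:ℝ) ≤ Lr ^ 8 := le_trans (by norm_num) anosov_L8
      have := inv_anti₀ (by norm_num : (0:ℝ) < 3) h3
      linarith
    calc ‖c‖ * (‖(Lr⁻¹) ^ 8‖ * ‖anosovU‖) ≤ ‖c‖ * ((1/3) * ‖anosovU‖) := by
          apply mul_le_mul_of_nonneg_left _ (norm_nonneg c)
          exact mul_le_mul_of_nonneg_right h8 hnu
      _ = 1/3 * (‖c‖ * ‖anosovU‖) := by ring
end

section
/- The linear map A : ℝ³ → ℝ³ has exactly one real eigenvalue, namely the unique real root λ of X³ − X² − 1 (which satisfies λ > 1); moreover every one-dimensional subspace L of ℝ³ with A(L) = L is contained in the eigenspace of λ. In particular, the two-dimensional A-invariant stable subspace contains no A-invariant line. -/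
/-- The linear map `A : ℝ³ → ℝ³`. -/
def LA : (Fin 3 → ℝ) →ₗ[ℝ] (Fin 3 → ℝ) := Matrix.mulVecLin Areal

lemma LA_apply (x : Fin 3 → ℝ) : LA x = ![x 0 + x 1, x 2, x 0] := by
  funext i
  fin_cases i <;> simp [LA, Areal, Matrix.mulVec, dotProduct, Fin.sum_univ_three]

lemma root_gt_one {lam : ℝ} (h : lam ^ 3 - lam ^ 2 - 1 = 0) : 1 < lam := by
  by_contra hc
  push_neg at hc
  nlinarith [sq_nonneg lam]

lemma root_unique {lam μ : ℝ} (h1 : lam ^ 3 - lam ^ 2 - 1 = 0)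
    (h2 : μ ^ 3 - μ ^ 2 - 1 = 0) : μ = lam := by
  have hl := root_gt_one h1
  have hm := root_gt_one h2
  have key : (μ - lam) * (μ ^ 2 + μ * lam + lam ^ 2 - μ - lam) = 0 := by
    linear_combination h2 - h1
  have hpos : 0 < μ ^ 2 + μ * lam + lam ^ 2 - μ - lam := by nlinarith
  rcases mul_eq_zero.1 key with h | h
  · linarith
  · linarith

/-- Any eigenvalue of `LA` is a root of `X³ - X² - 1`. -/
lemma eigenvalue_root {μ : ℝ} (h : Module.End.HasEigenvalue LA μ) :
    μ ^ 3 - μ ^ 2 - 1 = 0 := by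
  obtain ⟨w, hw⟩ := h.exists_hasEigenvector
  obtain ⟨hmem, hne⟩ := hw
  rw [Module.End.mem_eigenspace_iff] at hmem
  rw [LA_apply] at hmem
  have e0 : w 0 + w 1 = μ * w 0 := congrFun hmem 0
  have e1 : w 2 = μ * w 1 := congrFun hmem 1
  have e2 : w 0 = μ * w 2 := congrFun hmem 2
  by_cases hb : w 1 = 0
  · exfalso
    apply hne
    have h2 : w 2 = 0 := by rw [e1, hb, mul_zero]
    have h0 : w 0 = 0 := by rw [e2, h2, mul_zero]
    funext i
    fin_cases i <;> simp [h0, hb, h2]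
  · have : (μ ^ 3 - μ ^ 2 - 1) * w 1 = 0 := by
      have : μ * (μ * w 1) + w 1 = μ * (μ * (μ * w 1)) := by
        rw [← e1, ← e2]; exact e0
      linear_combination (-1 : ℝ) * this
    rcases mul_eq_zero.1 this with h | h
    · exact h
    · exact absurd h hb

lemma hasEigenvalue_lam {lam : ℝ} (hlam : lam ^ 3 - lam ^ 2 - 1 = 0) :
    Module.End.HasEigenvalue LA lam := by
  apply Module.End.hasEigenvalue_of_hasEigenvector (x := ![lam ^ 2, 1, lam])
  constructor
  · rw [Module.End.mem_eigenspace_iff, LA_apply]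
    funext i
    fin_cases i <;> simp <;> nlinarith [hlam]
  · intro h
    have := congrFun h 1
    norm_num at this

/-- `A : ℝ³ → ℝ³` has exactly one real eigenvalue, namely the unique real root `λ` of
`X³ − X² − 1` (which satisfies `λ > 1`); moreover every one-dimensional `A`-invariant
subspace `L` of `ℝ³` is contained in the eigenspace of `λ`. In particular, a
two-dimensional `A`-invariant (stable) subspace contains no `A`-invariant line. -/
theorem anosov_unique_real_eigenvalue (lam : ℝ) (hlam : lam ^ 3 - lam ^ 2 - 1 = 0) :
    Module.End.HasEigenvalue LA lam ∧
    1 < lam ∧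
    (∀ μ : ℝ, Module.End.HasEigenvalue LA μ → μ = lam) ∧
    (∀ L : Submodule ℝ (Fin 3 → ℝ), Module.finrank ℝ L = 1 → L.map LA = L →
      L ≤ Module.End.eigenspace LA lam) ∧
    (∀ Es : Submodule ℝ (Fin 3 → ℝ), Module.finrank ℝ Es = 2 → Es.map LA = Es →
      ∀ L : Submodule ℝ (Fin 3 → ℝ), Module.finrank ℝ L = 1 → L.map LA = L → ¬ L ≤ Es) := by
  have hgt := root_gt_one hlam
  have huniq : ∀ μ : ℝ, Module.End.HasEigenvalue LA μ → μ = lam := fun μ hμ =>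
    root_unique hlam (eigenvalue_root hμ)
  -- Part 4
  have part4 : ∀ L : Submodule ℝ (Fin 3 → ℝ), Module.finrank ℝ L = 1 → L.map LA = L →
      L ≤ Module.End.eigenspace LA lam := by
    intro L hrank hinv
    obtain ⟨⟨v, hvL⟩, hvne, hgen⟩ := finrank_eq_one_iff' (K := ℝ) (V := L) |>.1 hrank
    have hvne' : v ≠ 0 := fun h => hvne (by simpa [Subtype.ext_iff] using h)
    -- LA v ∈ L
    have hLAv : LA v ∈ L := by
      rw [← hinv]
      exact Submodule.mem_map_of_mem hvL
    obtain ⟨c, hc⟩ := hgen ⟨LA v, hLAv⟩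
    have hc' : c • v = LA v := congrArg Subtype.val hc
    have hev : Module.End.HasEigenvector LA c v := by
      refine ⟨?_, hvne'⟩
      rw [Module.End.mem_eigenspace_iff]
      exact hc'.symm
    have : c = lam := huniq c (Module.End.hasEigenvalue_of_hasEigenvector hev)
    subst this
    -- every element of L is a multiple of v
    intro x hxL
    obtain ⟨d, hd⟩ := hgen ⟨x, hxL⟩
    have hd' : d • v = x := congrArg Subtype.val hd
    rw [Module.End.mem_eigenspace_iff, ← hd', map_smul, ← hc', smul_comm]
  refine ⟨hasEigenvalue_lam hlam, hgt, huniq, part4, ?_⟩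
  intro Es hErank hEinv L hLrank hLinv hLE
  -- get a nonzero eigenvector in L
  have hLeig := part4 L hLrank hLinv
  obtain ⟨⟨v, hvL⟩, hvne, -⟩ := finrank_eq_one_iff' (K := ℝ) (V := L) |>.1 hLrank
  have hvne' : v ≠ 0 := fun h => hvne (by simpa [Subtype.ext_iff] using h)
  have hveig : LA v = lam • v := by
    have := hLeig hvL
    rwa [Module.End.mem_eigenspace_iff] at this
  have hvEs : v ∈ Es := hLE hvL
  -- eigenvector equations for v
  have e0 : v 0 + v 1 = lam * v 0 := by
    rw [LA_apply] at hveig; simpa using congrFun hveig 0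
  have e1 : v 2 = lam * v 1 := by
    rw [LA_apply] at hveig; simpa using congrFun hveig 1
  have e2 : v 0 = lam * v 2 := by
    rw [LA_apply] at hveig; simpa using congrFun hveig 2
  have hv1 : v 1 ≠ 0 := by
    intro hb
    apply hvne'
    have h2 : v 2 = 0 := by rw [e1, hb, mul_zero]
    have h0 : v 0 = 0 := by rw [e2, h2, mul_zero]
    funext i; fin_cases i <;> simp [h0, hb, h2]
  -- construct a functional vanishing on Es
  have hElt : Es < ⊤ := by
    rw [lt_top_iff_ne_top]
    intro h
    rw [h] at hErank
    simp [finrank_top] at hErank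
  obtain ⟨φ, hφne, hφbot⟩ := Es.exists_dual_map_eq_bot_of_lt_top hElt inferInstance
  have hEker : Es ≤ LinearMap.ker φ := by
    intro x hx
    rw [LinearMap.mem_ker]
    have : φ x ∈ Es.map φ := Submodule.mem_map_of_mem hx
    rwa [hφbot, Submodule.mem_bot] at this
  -- Es = ker φ by dimension
  have hkerrank : Module.finrank ℝ (LinearMap.ker φ) ≤ 2 := by
    have hr : Module.finrank ℝ (LinearMap.range φ) = 1 := by
      have h1 : Module.finrank ℝ (LinearMap.range φ) ≠ 0 := by
        intro h
        rw [Submodule.finrank_eq_zero] at h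
        apply hφne
        apply LinearMap.ext
        intro x
        have hx : φ x ∈ LinearMap.range φ := LinearMap.mem_range_self φ x
        rw [h, Submodule.mem_bot] at hx
        simpa using hx
      have h2 : Module.finrank ℝ (LinearMap.range φ) ≤ Module.finrank ℝ ℝ :=
        Submodule.finrank_le _
      simp at h2
      omega
    have := LinearMap.finrank_range_add_finrank_ker φ
    have h3 : Module.finrank ℝ (Fin 3 → ℝ) = 3 := by simp
    omega
  have hEeq : Es = LinearMap.ker φ := by
    apply Submodule.eq_of_le_of_finrank_le hEker
    omega
  -- invariance: φ ∘ LA = μ • φ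
  obtain ⟨x₀, hx₀⟩ : ∃ x₀, φ x₀ = 1 := by
    obtain ⟨y, hy⟩ : ∃ y, φ y ≠ 0 := by
      by_contra h
      push_neg at h
      exact hφne (LinearMap.ext fun x => by simpa using h x)
    exact ⟨(φ y)⁻¹ • y, by simp [inv_mul_cancel₀ hy]⟩
  set μ := φ (LA x₀) with hμdef
  have hcomm : ∀ x, φ (LA x) = μ * φ x := by
    intro x
    have hmem : x - φ x • x₀ ∈ Es := by
      rw [hEeq, LinearMap.mem_ker]
      simp [hx₀]
    have : LA (x - φ x • x₀) ∈ Es := by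
      rw [← hEinv]; exact Submodule.mem_map_of_mem hmem
    have hz : φ (LA (x - φ x • x₀)) = 0 := hEker this
    rw [map_sub, map_smul, map_sub, map_smul] at hz
    simp only [smul_eq_mul] at hz
    linarith [hz]
  -- set the coordinates of φ
  set u0 := φ ![1, 0, 0] with hu0
  set u1 := φ ![0, 1, 0] with hu1
  set u2 := φ ![0, 0, 1] with hu2
  have hφval : ∀ x : Fin 3 → ℝ, φ x = x 0 * u0 + x 1 * u1 + x 2 * u2 := by
    intro x
    have hx : x = x 0 • ![(1:ℝ), 0, 0] + x 1 • ![(0:ℝ), 1, 0] + x 2 • ![(0:ℝ), 0, 1] := by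
      funext i; fin_cases i <;> simp
    rw [hx]
    simp only [map_add, map_smul, smul_eq_mul]
    have h0 : (x 0 • ![(1:ℝ), 0, 0] + x 1 • ![(0:ℝ), 1, 0] + x 2 • ![(0:ℝ), 0, 1]) 0 = x 0 := by simp
    have h1 : (x 0 • ![(1:ℝ), 0, 0] + x 1 • ![(0:ℝ), 1, 0] + x 2 • ![(0:ℝ), 0, 1]) 1 = x 1 := by simp
    have h2 : (x 0 • ![(1:ℝ), 0, 0] + x 1 • ![(0:ℝ), 1, 0] + x 2 • ![(0:ℝ), 0, 1]) 2 = x 2 := by simp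
    rw [h0, h1, h2]
  -- transpose eigenvector equations
  have f0 : u0 + u2 = μ * u0 := by
    have := hcomm ![1, 0, 0]
    rw [hφval (LA ![1, 0, 0]), LA_apply, hφval ![1, 0, 0]] at this
    norm_num [Matrix.cons_val_two, Matrix.vecHead, Matrix.vecTail] at this
    linarith [this]
  have f1 : u0 = μ * u1 := by
    have := hcomm ![0, 1, 0]
    rw [hφval (LA ![0, 1, 0]), LA_apply, hφval ![0, 1, 0]] at this
    norm_num [Matrix.cons_val_two, Matrix.vecHead, Matrix.vecTail] at this
    linarith [this]
  have f2 : u1 = μ * u2 := by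
    have := hcomm ![0, 0, 1]
    rw [hφval (LA ![0, 0, 1]), LA_apply, hφval ![0, 0, 1]] at this
    norm_num [Matrix.cons_val_two, Matrix.vecHead, Matrix.vecTail] at this
    linarith [this]
  have hu2ne : u2 ≠ 0 := by
    intro h
    have h1 : u1 = 0 := by rw [f2, h, mul_zero]
    have h0 : u0 = 0 := by rw [f1, h1, mul_zero]
    have := hφval x₀
    rw [hx₀, h0, h1, h] at this
    norm_num at this
  have hμroot : μ ^ 3 - μ ^ 2 - 1 = 0 := by
    have : (μ ^ 3 - μ ^ 2 - 1) * u2 = 0 := by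
      have h0 : u0 = μ * (μ * u2) := by rw [f1, f2]
      linear_combination -f0 - (μ - 1) * h0
    rcases mul_eq_zero.1 this with h | h
    · exact h
    · exact absurd h hu2ne
  have hμlam : μ = lam := root_unique hlam hμroot
  -- φ v = 0 but also φ v ≠ 0
  have hφv : φ v = 0 := hEker hvEs
  rw [hφval v] at hφv
  -- v 0 = lam^2 * v 1, v 2 = lam * v 1; u0 = lam^2 * u2, u1 = lam * u2
  have hv0 : v 0 = lam ^ 2 * v 1 := by rw [e2, e1]; ring
  have hu1' : u1 = lam * u2 := by rw [f2, hμlam]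
  have hu0' : u0 = lam ^ 2 * u2 := by rw [f1, hu1', hμlam]; ring
  rw [hv0, e1, hu0', hu1'] at hφv
  have : v 1 * u2 * (lam ^ 4 + 2 * lam) = 0 := by linear_combination hφv
  have hpos : (0:ℝ) < lam ^ 4 + 2 * lam := by nlinarith
  have := mul_eq_zero.1 this
  rcases this with h | h
  · rcases mul_eq_zero.1 h with h' | h'
    · exact hv1 h'
    · exact hu2ne h'
  · linarith
end

section
/- Let λ > 1 and t ∈ ℝ. Suppose that for every δ > 0 there exist n ∈ ℕ and real numbers z₀, z₁, …, z_n with z₀ = t, z_n = 0, and |z_{i+1} − λ·z_i| ≤ δ for all 0 ≤ i < n. Then t = 0. -/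
/-- Let `λ > 1` and `t ∈ ℝ`. If for every `δ > 0` there is a `δ`-pseudo-orbit of the
homothety `x ↦ λx` joining `t` to `0` (i.e. reals `z₀, …, z_n` with `z₀ = t`, `z_n = 0`
and `|z_{i+1} − λ·z_i| ≤ δ` for all `i < n`), then `t = 0`. -/
theorem fixed_point_of_small_pseudo_orbits (lam t : ℝ) (hlam : 1 < lam)
    (h : ∀ δ : ℝ, 0 < δ → ∃ (n : ℕ) (z : ℕ → ℝ), z 0 = t ∧ z n = 0 ∧
      ∀ i < n, |z (i + 1) - lam * z i| ≤ δ) :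
    t = 0 := by
  by_contra ht
  have htpos : 0 < |t| := abs_pos.mpr ht
  have hδ : 0 < (lam - 1) * |t| / 2 := div_pos (mul_pos (by linarith) htpos) two_pos
  obtain ⟨n, z, hz0, hzn, hstep⟩ := h _ hδ
  have key : ∀ i ≤ n, |t| ≤ |z i| := by
    intro i
    induction i with
    | zero => intro _; simp [hz0]
    | succ i ih =>
      intro hi
      have hi' : i < n := Nat.lt_of_succ_le hi
      have h1 := ih (le_of_lt hi')
      have h2 := hstep i hi'
      have h3 : |lam * z i| - |z (i+1)| ≤ (lam - 1) * |t| / 2 := by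
        calc |lam * z i| - |z (i+1)| ≤ |z (i+1) - lam * z i| := by
              rw [abs_sub_comm]; exact abs_sub_abs_le_abs_sub _ _
          _ ≤ _ := h2
      have h4 : lam * |t| ≤ |lam * z i| := by
        rw [abs_mul, abs_of_pos (show (0:ℝ) < lam by linarith)]
        nlinarith [h1]
      nlinarith
  have := key n le_rfl
  rw [hzn] at this
  simp only [abs_zero] at this
  linarith
end

section
/- Let X be a compact metric space, μ a finite Borel measure on X, and U ⊆ X an open set. For a continuous map f : X → X define U⁺(f) = {x ∈ X : f^[n](x) ∈ closure(U) for every n ≥ 0}. Let ε > 0 and let g : X → X be continuous with μ(U⁺(g)) < ε. Then there exists η > 0 such that every continuous map f : X → X satisfying d(f(x), g(x)) < η for all x ∈ X also satisfies μ(U⁺(f)) < ε. -/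
open MeasureTheory

/-- Iterates of uniformly close maps stay close for finitely many steps. -/
lemma iterates_close_of_close {X : Type*} [MetricSpace X] [CompactSpace X]
    (g : X → X) (hg : Continuous g) :
    ∀ (N : ℕ) (δ : ℝ), 0 < δ → ∃ η : ℝ, 0 < η ∧ ∀ f : X → X,
      (∀ x, dist (f x) (g x) < η) → ∀ x, ∀ n ≤ N, dist (f^[n] x) (g^[n] x) < δ := by
  intro N
  induction N with
  | zero =>
    intro δ hδ
    refine ⟨δ, hδ, fun f hf x n hn => ?_⟩
    interval_cases n
    simpa using hδ
  | succ N ih =>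
    intro δ hδ
    have hδ2 : 0 < δ / 2 := by linarith
    obtain ⟨δ', hδ', hδ'g⟩ := Metric.uniformContinuous_iff.1
      (CompactSpace.uniformContinuous_of_continuous hg) (δ / 2) hδ2
    obtain ⟨η', hη', hIH⟩ := ih (min δ' (δ / 2)) (lt_min hδ' hδ2)
    refine ⟨min η' (δ / 2), lt_min hη' hδ2, fun f hf x n hn => ?_⟩
    have hf' : ∀ x, dist (f x) (g x) < η' :=
      fun x => lt_of_lt_of_le (hf x) (min_le_left _ _)
    rcases Nat.lt_succ_iff_lt_or_eq.1 (Nat.lt_succ_of_le hn) with h | h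
    · exact lt_of_lt_of_le (hIH f hf' x n (Nat.lt_succ_iff.1 h))
        (le_trans (min_le_right _ _) (by linarith))
    · subst h
      rw [Function.iterate_succ_apply', Function.iterate_succ_apply']
      calc dist (f (f^[N] x)) (g (g^[N] x))
          ≤ dist (f (f^[N] x)) (g (f^[N] x)) + dist (g (f^[N] x)) (g (g^[N] x)) :=
            dist_triangle _ _ _
        _ < δ / 2 + δ / 2 := by
            refine add_lt_add (lt_of_lt_of_le (hf _) (min_le_right _ _)) ?_
            exact hδ'g (lt_of_lt_of_le (hIH f hf' x N le_rfl) (min_le_left _ _))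
        _ = δ := by ring

/-- Let `X` be a compact metric space, `μ` a finite Borel measure on `X`, `U ⊆ X` open.
For `f : X → X` let `U⁺(f) = {x : f^[n](x) ∈ closure U for all n ≥ 0}`. If `g` is
continuous with `μ(U⁺(g)) < ε`, then there is `η > 0` such that every continuous `f`
with `d(f(x), g(x)) < η` for all `x` also satisfies `μ(U⁺(f)) < ε`: the measure of the
maximal forward-invariant set in `closure U` is upper semicontinuous in the `C⁰`
topology. -/
theorem measure_of_forward_invariant_set_semicontinuous
    {X : Type*} [MetricSpace X] [CompactSpace X] [MeasurableSpace X] [BorelSpace X]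
    (μ : Measure X) [IsFiniteMeasure μ] (U : Set X) (hU : IsOpen U)
    (ε : ENNReal) (hε : 0 < ε) (g : X → X) (hg : Continuous g)
    (hμg : μ {x : X | ∀ n : ℕ, g^[n] x ∈ closure U} < ε) :
    ∃ η : ℝ, 0 < η ∧ ∀ f : X → X, Continuous f → (∀ x : X, dist (f x) (g x) < η) →
      μ {x : X | ∀ n : ℕ, f^[n] x ∈ closure U} < ε := by
  set S : Set X := closure U with hS
  have hSclosed : IsClosed S := isClosed_closure
  set C : ℕ → Set X :=
    fun N => {x | ∀ n ≤ N, g^[n] x ∈ Metric.cthickening (1 / (N + 1)) S} with hC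
  have hCclosed : ∀ N, IsClosed (C N) := by
    intro N
    have : C N = ⋂ n, ⋂ _ : n ≤ N, (g^[n]) ⁻¹' Metric.cthickening (1 / (N + 1)) S := by
      ext x; simp [hC, Set.mem_iInter]
    rw [this]
    exact isClosed_iInter fun n => isClosed_iInter fun _ =>
      Metric.isClosed_cthickening.preimage (hg.iterate n)
  have hanti : Antitone C := by
    intro N M hNM x hx n hn
    have h1 : (1 : ℝ) / (M + 1) ≤ 1 / (N + 1) := by
      apply one_div_le_one_div_of_le
      · positivity
      · exact_mod_cast by omega
    exact Metric.cthickening_mono h1 S (hx n (le_trans hn hNM))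
  have hiInter : ⋂ N, C N = {x : X | ∀ n : ℕ, g^[n] x ∈ S} := by
    ext x
    simp only [Set.mem_iInter, Set.mem_setOf_eq]
    constructor
    · intro h n
      have key : ∀ M : ℕ, EMetric.infEdist (g^[n] x) S ≤ ENNReal.ofReal (1 / (M + 1)) := by
        intro M
        have hM : g^[n] x ∈ Metric.cthickening (1 / (max M n + 1)) S :=
          h (max M n) n (le_max_right _ _)
        refine le_trans (Metric.mem_cthickening_iff.1 hM) ?_
        apply ENNReal.ofReal_le_ofReal
        apply one_div_le_one_div_of_le
        · positivity
        · exact_mod_cast by omega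
      have h0 : EMetric.infEdist (g^[n] x) S ≤ 0 := by
        have ht : Filter.Tendsto (fun M : ℕ => ENNReal.ofReal (1 / (M + 1)))
            Filter.atTop (nhds 0) := by
          have := (ENNReal.continuous_ofReal.tendsto 0).comp
            tendsto_one_div_add_atTop_nhds_zero_nat
          simpa [Function.comp_def] using this
        exact ge_of_tendsto ht (Filter.Eventually.of_forall key)
      have := le_antisymm h0 zero_le
      rw [← hSclosed.closure_eq]
      exact EMetric.mem_closure_iff_infEdist_zero.2 this
    · intro h N n _
      exact Metric.self_subset_cthickening _ (h n)
  have htend : Filter.Tendsto (fun N => μ (C N)) Filter.atTop (nhds (μ (⋂ N, C N))) := by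
    refine tendsto_measure_iInter_atTop (fun N => (hCclosed N).measurableSet.nullMeasurableSet) hanti
      ⟨0, measure_ne_top μ _⟩
  rw [hiInter] at htend
  have hEv : ∀ᶠ N in Filter.atTop, μ (C N) < ε := htend.eventually_lt_const hμg
  obtain ⟨N, hN⟩ := hEv.exists
  have hδpos : (0 : ℝ) < 1 / (N + 1) := by positivity
  obtain ⟨η, hη, hηf⟩ := iterates_close_of_close g hg N (1 / (N + 1)) hδpos
  refine ⟨η, hη, fun f hf hclose => ?_⟩
  have hsub : {x : X | ∀ n : ℕ, f^[n] x ∈ S} ⊆ C N := by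
    intro x hx n hn
    refine Metric.mem_cthickening_of_dist_le (g^[n] x) (f^[n] x) _ S (hx n) ?_
    rw [dist_comm]
    exact (hηf f hclose x n hn).le
  exact lt_of_le_of_lt (measure_mono hsub) hN
end
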